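/- Let ρ_{BE} be a density operator on a finite-dimensional tensor product Hilbert space B ⊗ E, with marginals ρ_B = Tr_E(ρ_{BE}) and ρ_E = Tr_B(ρ_{BE}). Then Tr(ρ_B²) + Tr(ρ_E²) ≤ 1 + Tr(ρ_{BE}²). -/

import Mathlib

open scoped ENNReal ComplexOrder Matrix
open Matrix

noncomputable section

namespace EoP

/-- Partial trace over the right (second) tensor factor. -/
def ptraceRight {α β : Type*} [Fintype β] (A : Matrix (α × β) (α × β) ℂ) : Matrix α α ℂ :=
  fun a b => ∑ j, A (a, j) (b, j)

/-- Partial trace over the left (first) tensor factor. -/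
def ptraceLeft {α β : Type*} [Fintype α] (A : Matrix (α × β) (α × β) ℂ) : Matrix β β ℂ :=
  fun a b => ∑ i, A (i, a) (i, b)

/-- `Ω ⊗ id`, acting blockwise on the left tensor factor. -/
def mapLeft {α α' β : Type*} (Ω : Matrix α α ℂ → Matrix α' α' ℂ)
    (A : Matrix (α × β) (α × β) ℂ) : Matrix (α' × β) (α' × β) ℂ :=
  fun p q => Ω (fun a b => A (a, p.2) (b, q.2)) p.1 q.1

/-- `id ⊗ Λ`, acting blockwise on the right tensor factor. -/
def mapRight {α α' β : Type*} (Λ : Matrix α α ℂ → Matrix α' α' ℂ)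
    (A : Matrix (β × α) (β × α) ℂ) : Matrix (β × α') (β × α') ℂ :=
  fun p q => Λ (fun a b => A (p.1, a) (q.1, b)) p.2 q.2

/-- The normalized maximally entangled state `|Φ⟩⟨Φ|` on `α ⊗ α`. -/
def maxEntState (α : Type*) [Fintype α] [DecidableEq α] : Matrix (α × α) (α × α) ℂ :=
  fun x y => if x.1 = x.2 ∧ y.1 = y.2 then (Fintype.card α : ℂ)⁻¹ else 0

/-- Complete positivity: `Ω ⊗ id_k` preserves positive semidefiniteness for every
finite-dimensional ancilla. -/
def IsCompletelyPositive {α α' : Type*} [Fintype α] [Fintype α'] (Ω : Matrix α α ℂ → Matrix α' α' ℂ) : Prop :=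
  ∀ (k : ℕ) (A : Matrix (α × Fin k) (α × Fin k) ℂ), A.PosSemidef → (mapLeft Ω A).PosSemidef

/-- Trace preservation. -/
def IsTracePreserving {α α' : Type*} [Fintype α] [Fintype α']
    (Ω : Matrix α α ℂ → Matrix α' α' ℂ) : Prop :=
  ∀ X, (Ω X).trace = X.trace

/-- CPTP map: linear, completely positive and trace preserving. -/
def IsCPTP {α α' : Type*} [Fintype α] [Fintype α']
    (Ω : Matrix α α ℂ → Matrix α' α' ℂ) : Prop :=
  IsLinearMap ℂ Ω ∧ IsCompletelyPositive Ω ∧ IsTracePreserving Ω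

/-- Schatten `p`-norm of a (square, complex) matrix, via its singular values,
i.e. `‖A‖_p = (Tr |A|^p)^(1/p)` for `p < ∞` and the largest singular value for `p = ∞`. -/
def schattenNorm {α : Type*} [Fintype α] [DecidableEq α] (p : ℝ≥0∞)
    (A : Matrix α α ℂ) : ℝ :=
  if p = ⊤ then
    ⨆ i, Real.sqrt ((Matrix.posSemidef_conjTranspose_mul_self A).1.eigenvalues i)
  else
    (∑ i, Real.sqrt ((Matrix.posSemidef_conjTranspose_mul_self A).1.eigenvalues i) ^ p.toReal)
      ^ (1 / p.toReal)

/-- The constrained maximal output Schatten `p`-norm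
`υ_p(Ω) = sup_{E, Λ CPTP} ‖(Ω ⊗ id_E)((id ⊗ Λ)(Φ))‖_p`. -/
def upsilon {α α' : Type*} [Fintype α] [DecidableEq α] [Fintype α'] [DecidableEq α']
    (p : ℝ≥0∞) (Ω : Matrix α α ℂ → Matrix α' α' ℂ) : ℝ :=
  ⨆ e : ℕ, ⨆ Λ : {Λ : Matrix α α ℂ → Matrix (Fin e) (Fin e) ℂ // IsCPTP Λ},
    schattenNorm p (mapLeft Ω (mapRight Λ.1 (maxEntState α)))

/-- The transpose-depolarizing channel `Γ_t(X) = t Xᵀ + (1−t) Tr(X) I/d`. -/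
def Gamma (d : ℕ) (t : ℝ) (X : Matrix (Fin d) (Fin d) ℂ) : Matrix (Fin d) (Fin d) ℂ :=
  (t : ℂ) • Xᵀ + (((1 - t) / (d : ℝ) : ℝ) : ℂ) • X.trace • (1 : Matrix (Fin d) (Fin d) ℂ)

/-- The completely depolarizing map `D(X) = Tr(X) I/d`. -/
def depol (d : ℕ) (X : Matrix (Fin d) (Fin d) ℂ) : Matrix (Fin d) (Fin d) ℂ :=
  ((d : ℂ)⁻¹) • X.trace • (1 : Matrix (Fin d) (Fin d) ℂ)

/-- `n`-fold tensor power of a (linear) map on matrix algebras. -/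
def tensorPowMap {α α' : Type*} [Fintype α] [DecidableEq α] (n : ℕ)
    (Φ : Matrix α α ℂ → Matrix α' α' ℂ)
    (X : Matrix (Fin n → α) (Fin n → α) ℂ) :
    Matrix (Fin n → α') (Fin n → α') ℂ :=
  fun a b => ∑ k : Fin n → α, ∑ l : Fin n → α,
    (∏ i, Φ (Matrix.single (k i) (l i) 1) (a i) (b i)) * X k l

/-- The swap (flip) operator on `ℂ^d ⊗ ℂ^d`. -/
def swapOp (d : ℕ) : Matrix (Fin d × Fin d) (Fin d × Fin d) ℂ :=
  fun p q => if p.1 = q.2 ∧ p.2 = q.1 then 1 else 0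


section PurityAux

set_option linter.unusedSectionVars false

variable {K B E : Type*} [Fintype K] [Fintype B] [Fintype E]

private lemma swap12 {α β : Type*} [Fintype α] [Fintype β] (f : α → β → ℂ) :
    ∑ a, ∑ b, f a b = ∑ b, ∑ a, f a b := Finset.sum_comm

private lemma swap23 {α β γ : Type*} [Fintype α] [Fintype β] [Fintype γ] (f : α → β → γ → ℂ) :
    ∑ a, ∑ b, ∑ c, f a b c = ∑ a, ∑ c, ∑ b, f a b c :=
  Finset.sum_congr rfl fun _ _ => Finset.sum_comm

private lemma swap34 {α β γ δ : Type*} [Fintype α] [Fintype β] [Fintype γ] [Fintype δ]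
    (f : α → β → γ → δ → ℂ) :
    ∑ a, ∑ b, ∑ c, ∑ d, f a b c d = ∑ a, ∑ b, ∑ d, ∑ c, f a b c d :=
  Finset.sum_congr rfl fun _ _ => Finset.sum_congr rfl fun _ _ => Finset.sum_comm

private lemma sum_swap4 {α β γ δ : Type*} [Fintype α] [Fintype β] [Fintype γ] [Fintype δ]
    (f : α → β → γ → δ → ℂ) :
    ∑ a, ∑ b, ∑ c, ∑ d, f a b c d = ∑ c, ∑ d, ∑ a, ∑ b, f a b c d :=
  calc ∑ a, ∑ b, ∑ c, ∑ d, f a b c d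
      = ∑ a, ∑ c, ∑ b, ∑ d, f a b c d := swap23 _
    _ = ∑ c, ∑ a, ∑ b, ∑ d, f a b c d := swap12 _
    _ = ∑ c, ∑ a, ∑ d, ∑ b, f a b c d := swap34 _
    _ = ∑ c, ∑ d, ∑ a, ∑ b, f a b c d := swap23 _

private def TT1 (u v : B × E → ℂ) : ℂ := (∑ x, star (u x) * u x) * (∑ x, star (v x) * v x)
private def TT2 (u v : B × E → ℂ) : ℂ := (∑ x, star (u x) * v x) * (∑ x, u x * star (v x))
private def TT3 (u v : B × E → ℂ) : ℂ :=
  ∑ b, ∑ b', (∑ e, star (u (b, e)) * u (b', e)) * (∑ e', v (b, e') * star (v (b', e')))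
private def TT4 (u v : B × E → ℂ) : ℂ :=
  ∑ b, ∑ b', (∑ e, star (u (b, e)) * v (b', e)) * (∑ e', u (b, e') * star (v (b', e')))

private def gg (u v : B × E → ℂ) (b b' : B) (e e' : E) : ℂ :=
  u (b, e) * v (b', e') - u (b', e) * v (b, e') - u (b, e') * v (b', e) + u (b', e') * v (b, e)

private lemma gg_swapB (u v : B × E → ℂ) (b b' : B) (e e' : E) :
    gg u v b' b e e' = - gg u v b b' e e' := by unfold gg; ring

private lemma gg_swapE (u v : B × E → ℂ) (b b' : B) (e e' : E) :
    gg u v b b' e' e = - gg u v b b' e e' := by unfold gg; ring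

private lemma identI (u v : B × E → ℂ) :
    TT1 u v + TT2 u v - TT3 u v - TT4 u v
      = ∑ b, ∑ b', ∑ e, ∑ e', star (u (b, e) * v (b', e')) * gg u v b b' e e' := by
  have h1 : TT1 u v = ∑ b, ∑ b', ∑ e, ∑ e',
      (star (u (b, e)) * u (b, e)) * (star (v (b', e')) * v (b', e')) := by
    rw [TT1, Fintype.sum_mul_sum]
    simp only [Fintype.sum_prod_type]
    exact swap23 _
  have h2 : TT2 u v = ∑ b, ∑ b', ∑ e, ∑ e',
      (star (u (b, e)) * v (b, e)) * (u (b', e') * star (v (b', e'))) := by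
    rw [TT2, Fintype.sum_mul_sum]
    simp only [Fintype.sum_prod_type]
    exact swap23 _
  have h3 : TT3 u v = ∑ b, ∑ b', ∑ e, ∑ e',
      (star (u (b, e)) * u (b', e)) * (v (b, e') * star (v (b', e'))) := by
    rw [TT3]
    exact Finset.sum_congr rfl fun b _ => Finset.sum_congr rfl fun b' _ =>
      Fintype.sum_mul_sum _ _
  have h4 : TT4 u v = ∑ b, ∑ b', ∑ e, ∑ e',
      (star (u (b, e)) * v (b', e)) * (u (b, e') * star (v (b', e'))) := by
    rw [TT4]
    exact Finset.sum_congr rfl fun b _ => Finset.sum_congr rfl fun b' _ =>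
      Fintype.sum_mul_sum _ _
  rw [h1, h2, h3, h4]
  simp only [← Finset.sum_add_distrib, ← Finset.sum_sub_distrib]
  refine Finset.sum_congr rfl fun b _ => Finset.sum_congr rfl fun b' _ =>
    Finset.sum_congr rfl fun e _ => Finset.sum_congr rfl fun e' _ => ?_
  simp only [gg, star_mul']
  ring

private lemma identII (u v : B × E → ℂ) :
    ∑ b, ∑ b', ∑ e, ∑ e', star (gg u v b b' e e') * gg u v b b' e e'
      = 4 * ∑ b, ∑ b', ∑ e, ∑ e', star (u (b, e) * v (b', e')) * gg u v b b' e e' := by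
  set F : B → B → E → E → ℂ := fun b b' e e' => star (u (b, e) * v (b', e')) with hF
  have expand : ∀ (b b' : B) (e e' : E), star (gg u v b b' e e') * gg u v b b' e e'
      = F b b' e e' * gg u v b b' e e' - F b' b e e' * gg u v b b' e e'
        - F b b' e' e * gg u v b b' e e' + F b' b e' e * gg u v b b' e e' := by
    intro b b' e e'
    simp only [hF, gg, star_sub, star_add, star_mul']
    ring
  simp only [expand, Finset.sum_sub_distrib, Finset.sum_add_distrib]
  have hS2 : (∑ b, ∑ b', ∑ e, ∑ e', F b' b e e' * gg u v b b' e e')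
      = - ∑ b, ∑ b', ∑ e, ∑ e', F b b' e e' * gg u v b b' e e' := by
    rw [swap12]
    have pt : ∀ (b b' : B) (e e' : E), F b b' e e' * gg u v b' b e e'
        = -(F b b' e e' * gg u v b b' e e') := fun b b' e e' => by
      rw [gg_swapB u v b b' e e', mul_neg]
    simp only [pt, Finset.sum_neg_distrib]
  have hS3 : (∑ b, ∑ b', ∑ e, ∑ e', F b b' e' e * gg u v b b' e e')
      = - ∑ b, ∑ b', ∑ e, ∑ e', F b b' e e' * gg u v b b' e e' := by
    rw [swap34]
    have pt : ∀ (b b' : B) (e e' : E), F b b' e e' * gg u v b b' e' e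
        = -(F b b' e e' * gg u v b b' e e') := fun b b' e e' => by
      rw [gg_swapE u v b b' e e', mul_neg]
    simp only [pt, Finset.sum_neg_distrib]
  have hS4 : (∑ b, ∑ b', ∑ e, ∑ e', F b' b e' e * gg u v b b' e e')
      = ∑ b, ∑ b', ∑ e, ∑ e', F b b' e e' * gg u v b b' e e' := by
    rw [swap12, swap34]
    have pt : ∀ (b b' : B) (e e' : E), F b b' e e' * gg u v b' b e' e
        = F b b' e e' * gg u v b b' e e' := fun b b' e e' => by
      rw [gg_swapB u v b b' e' e, gg_swapE u v b b' e e', neg_neg]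
    simp only [pt]
  rw [hS2, hS3, hS4]
  ring

private lemma pair (u v : B × E → ℂ) : TT3 u v + TT4 u v ≤ TT1 u v + TT2 u v := by
  rw [← sub_nonneg]
  have h : TT1 u v + TT2 u v - (TT3 u v + TT4 u v)
      = (1 / 4 : ℂ) * ∑ b, ∑ b', ∑ e, ∑ e',
          star (gg u v b b' e e') * gg u v b b' e e' := by
    rw [identII]
    linear_combination identI u v
  rw [h]
  have h4 : (0 : ℂ) ≤ 1 / 4 := by
    simpa using Complex.zero_le_real.mpr (by norm_num : (0:ℝ) ≤ 1/4)
  refine mul_nonneg h4 ?_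
  exact Finset.sum_nonneg fun b _ => Finset.sum_nonneg fun b' _ =>
    Finset.sum_nonneg fun e _ => Finset.sum_nonneg fun e' _ => star_mul_self_nonneg _

private lemma L1 (N : Matrix K (B × E) ℂ) :
    (Nᴴ * N).trace * (Nᴴ * N).trace = ∑ k, ∑ l, TT1 (N k) (N l) := by
  have h : (Nᴴ * N).trace = ∑ k, ∑ x, star (N k x) * N k x := by
    simp only [Matrix.trace, Matrix.diag, Matrix.mul_apply, Matrix.conjTranspose_apply]
    exact swap12 _
  rw [h, Fintype.sum_mul_sum]
  exact Finset.sum_congr rfl fun k _ => Finset.sum_congr rfl fun l _ => rfl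

private lemma L2 (N : Matrix K (B × E) ℂ) :
    ((Nᴴ * N) * (Nᴴ * N)).trace = ∑ k, ∑ l, TT2 (N k) (N l) := by
  calc ((Nᴴ * N) * (Nᴴ * N)).trace
      = ∑ x, ∑ y, (∑ k, star (N k x) * N k y) * (∑ l, star (N l y) * N l x) := by
        simp only [Matrix.trace, Matrix.diag, Matrix.mul_apply, Matrix.conjTranspose_apply]
    _ = ∑ x, ∑ y, ∑ k, ∑ l, (star (N k x) * N k y) * (star (N l y) * N l x) :=
        Finset.sum_congr rfl fun x _ => Finset.sum_congr rfl fun y _ =>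
          Fintype.sum_mul_sum _ _
    _ = ∑ k, ∑ l, ∑ x, ∑ y, (star (N k x) * N k y) * (star (N l y) * N l x) := sum_swap4 _
    _ = ∑ k, ∑ l, TT2 (N k) (N l) := by
        refine Finset.sum_congr rfl fun k _ => Finset.sum_congr rfl fun l _ => ?_
        rw [TT2, Fintype.sum_mul_sum]
        exact Finset.sum_congr rfl fun x _ => Finset.sum_congr rfl fun y _ => by ring

private lemma L3 (N : Matrix K (B × E) ℂ) :
    (ptraceRight (Nᴴ * N) * ptraceRight (Nᴴ * N)).trace = ∑ k, ∑ l, TT3 (N k) (N l) := by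
  calc (ptraceRight (Nᴴ * N) * ptraceRight (Nᴴ * N)).trace
      = ∑ b, ∑ b', (∑ e, ∑ k, star (N k (b, e)) * N k (b', e)) *
          (∑ e', ∑ l, star (N l (b', e')) * N l (b, e')) := by
        simp only [Matrix.trace, Matrix.diag, Matrix.mul_apply, ptraceRight,
          Matrix.conjTranspose_apply]
    _ = ∑ b, ∑ b', (∑ k, ∑ e, star (N k (b, e)) * N k (b', e)) *
          (∑ l, ∑ e', star (N l (b', e')) * N l (b, e')) := by
        refine Finset.sum_congr rfl fun b _ => Finset.sum_congr rfl fun b' _ => ?_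
        congr 1
        · exact swap12 _
        · exact swap12 _
    _ = ∑ b, ∑ b', ∑ k, ∑ l, (∑ e, star (N k (b, e)) * N k (b', e)) *
          (∑ e', star (N l (b', e')) * N l (b, e')) :=
        Finset.sum_congr rfl fun b _ => Finset.sum_congr rfl fun b' _ =>
          Fintype.sum_mul_sum _ _
    _ = ∑ k, ∑ l, ∑ b, ∑ b', (∑ e, star (N k (b, e)) * N k (b', e)) *
          (∑ e', star (N l (b', e')) * N l (b, e')) := sum_swap4 _
    _ = ∑ k, ∑ l, TT3 (N k) (N l) := by
        refine Finset.sum_congr rfl fun k _ => Finset.sum_congr rfl fun l _ => ?_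
        rw [TT3]
        refine Finset.sum_congr rfl fun b _ => Finset.sum_congr rfl fun b' _ => ?_
        congr 1
        exact Finset.sum_congr rfl fun e' _ => mul_comm _ _

private lemma L4 (N : Matrix K (B × E) ℂ) :
    (ptraceLeft (Nᴴ * N) * ptraceLeft (Nᴴ * N)).trace = ∑ k, ∑ l, TT4 (N k) (N l) := by
  calc (ptraceLeft (Nᴴ * N) * ptraceLeft (Nᴴ * N)).trace
      = ∑ e, ∑ e', (∑ b, ∑ k, star (N k (b, e)) * N k (b, e')) *
          (∑ b', ∑ l, star (N l (b', e')) * N l (b', e)) := by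
        simp only [Matrix.trace, Matrix.diag, Matrix.mul_apply, ptraceLeft,
          Matrix.conjTranspose_apply]
    _ = ∑ e, ∑ e', (∑ k, ∑ b, star (N k (b, e)) * N k (b, e')) *
          (∑ l, ∑ b', star (N l (b', e')) * N l (b', e)) := by
        refine Finset.sum_congr rfl fun e _ => Finset.sum_congr rfl fun e' _ => ?_
        congr 1
        · exact swap12 _
        · exact swap12 _
    _ = ∑ e, ∑ e', ∑ k, ∑ l, (∑ b, star (N k (b, e)) * N k (b, e')) *
          (∑ b', star (N l (b', e')) * N l (b', e)) :=
        Finset.sum_congr rfl fun e _ => Finset.sum_congr rfl fun e' _ =>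
          Fintype.sum_mul_sum _ _
    _ = ∑ k, ∑ l, ∑ e, ∑ e', (∑ b, star (N k (b, e)) * N k (b, e')) *
          (∑ b', star (N l (b', e')) * N l (b', e)) := sum_swap4 _
    _ = ∑ k, ∑ l, ∑ e, ∑ e', ∑ b, ∑ b',
          (star (N k (b, e)) * N k (b, e')) * (star (N l (b', e')) * N l (b', e)) :=
        Finset.sum_congr rfl fun k _ => Finset.sum_congr rfl fun l _ =>
          Finset.sum_congr rfl fun e _ => Finset.sum_congr rfl fun e' _ =>
          Fintype.sum_mul_sum _ _
    _ = ∑ k, ∑ l, ∑ b, ∑ b', ∑ e, ∑ e',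
          (star (N k (b, e)) * N k (b, e')) * (star (N l (b', e')) * N l (b', e)) :=
        Finset.sum_congr rfl fun k _ => Finset.sum_congr rfl fun l _ => sum_swap4 _
    _ = ∑ k, ∑ l, TT4 (N k) (N l) := by
        refine Finset.sum_congr rfl fun k _ => Finset.sum_congr rfl fun l _ => ?_
        rw [TT4]
        refine Finset.sum_congr rfl fun b _ => Finset.sum_congr rfl fun b' _ => ?_
        rw [Fintype.sum_mul_sum]
        exact Finset.sum_congr rfl fun e _ => Finset.sum_congr rfl fun e' _ => by ring

end PurityAux

/-- Two-party purity inequality: `Tr(ρ_B²) + Tr(ρ_E²) ≤ 1 + Tr(ρ_{BE}²)`. -/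
theorem purity_inequality_bipartite
    (B E : Type*) [Fintype B] [DecidableEq B] [Fintype E] [DecidableEq E]
    (ρ : Matrix (B × E) (B × E) ℂ) (hρ : ρ.PosSemidef) (htr : ρ.trace = 1) :
    (ptraceRight ρ * ptraceRight ρ).trace + (ptraceLeft ρ * ptraceLeft ρ).trace
      ≤ 1 + (ρ * ρ).trace := by
  obtain ⟨N, hN⟩ : ∃ N : Matrix (B × E) (B × E) ℂ, ρ = Nᴴ * N := by
    open scoped MatrixOrder in
    obtain ⟨N, hN⟩ := CStarAlgebra.nonneg_iff_eq_star_mul_self.mp hρ.nonneg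
    exact ⟨N, hN⟩
  subst hN
  have hle : ∑ k, ∑ l, (TT3 (N k) (N l) + TT4 (N k) (N l))
      ≤ ∑ k, ∑ l, (TT1 (N k) (N l) + TT2 (N k) (N l)) :=
    Finset.sum_le_sum fun k _ => Finset.sum_le_sum fun l _ => pair _ _
  have lhs_eq : (ptraceRight (Nᴴ * N) * ptraceRight (Nᴴ * N)).trace +
        (ptraceLeft (Nᴴ * N) * ptraceLeft (Nᴴ * N)).trace
      = ∑ k, ∑ l, (TT3 (N k) (N l) + TT4 (N k) (N l)) := by
    rw [L3, L4, ← Finset.sum_add_distrib]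
    exact Finset.sum_congr rfl fun k _ => (Finset.sum_add_distrib).symm
  have rhs_eq : ∑ k, ∑ l, (TT1 (N k) (N l) + TT2 (N k) (N l))
      = 1 + ((Nᴴ * N) * (Nᴴ * N)).trace := by
    simp only [Finset.sum_add_distrib]
    rw [← L1, ← L2, htr, one_mul]
  rw [lhs_eq, ← rhs_eq]
  exact hle


end EoP
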